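/- arXiv:1603.07510 — 2 statements merged into one kernel-verified Lean document; each statement's English description precedes it below -/
import Mathlib

section
/- In a Riesz space, two elements x and y are disjoint (i.e., |x| ⊓ |y| = 0) if and only if b(x,y) = 0, where b(x,y) = |x| ⊓ y⁺ − |x| ⊓ y⁻. -/
/-- Lacey's function `b(x,y) = |x| ⊓ y⁺ − |x| ⊓ y⁻`. -/
def bLacey {E : Type*} [Lattice E] [AddCommGroup E] (x y : E) : E :=
  |x| ⊓ (y ⊔ 0) - |x| ⊓ ((-y) ⊔ 0)

/-- In a Riesz space, `x` and `y` are disjoint iff `b(x,y) = 0`. -/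
theorem stmt3 {E : Type*} [Lattice E] [AddCommGroup E] [Module ℝ E]
    [CovariantClass E E (· + ·) (· ≤ ·)] (x y : E) :
    |x| ⊓ |y| = 0 ↔ bLacey x y = 0 := by
  have hple : y⁺ ≤ |y| := by
    rw [← posPart_add_negPart y]; exact le_add_of_nonneg_right (negPart_nonneg y)
  have hnle : y⁻ ≤ |y| := by
    rw [← posPart_add_negPart y]; exact le_add_of_nonneg_left (posPart_nonneg y)
  have hyp : y ⊔ 0 = y⁺ := rfl
  have hyn : (-y) ⊔ 0 = y⁻ := rfl
  unfold bLacey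
  rw [hyp, hyn]
  constructor
  · intro h
    have hp : |x| ⊓ y⁺ = 0 := le_antisymm
      (h ▸ inf_le_inf_left _ hple) (le_inf (abs_nonneg x) (posPart_nonneg y))
    have hn : |x| ⊓ y⁻ = 0 := le_antisymm
      (h ▸ inf_le_inf_left _ hnle) (le_inf (abs_nonneg x) (negPart_nonneg y))
    rw [hp, hn, sub_zero]
  · intro h
    have he : |x| ⊓ y⁺ = |x| ⊓ y⁻ := sub_eq_zero.mp h
    have hc : |x| ⊓ y⁺ = 0 := le_antisymm
      (by
        calc |x| ⊓ y⁺ ≤ y⁺ ⊓ y⁻ := le_inf inf_le_right (he ▸ inf_le_right)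
        _ = 0 := posPart_inf_negPart_eq_zero y)
      (le_inf (abs_nonneg x) (posPart_nonneg y))
    letI : DistribLattice E := AddCommGroup.toDistribLattice E
    have habs : |y| = y⁺ ⊔ y⁻ := by
      have := inf_add_sup (y⁺) (y⁻)
      rw [posPart_inf_negPart_eq_zero, zero_add, posPart_add_negPart] at this
      exact this.symm
    rw [habs, inf_sup_left, hc, ← he, hc, sup_idem]
end

section
/- Let X be a Riesz space, P a band projection on X, U = 2P − I the associated sign change, and b(x,y) = |x| ⊓ y⁺ − |x| ⊓ y⁻ Lacey's function. Then b(Ux, Uy) = U(b(x, y)) for all x, y ∈ X. -/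
section auxLacey
variable {E : Type*} [Lattice E] [AddCommGroup E]
    [CovariantClass E E (· + ·) (· ≤ ·)]

attribute [local instance] AddCommGroup.toDistribLattice

set_option linter.unusedSectionVars false

private lemma posPart_le_abs' (a : E) : a⁺ ≤ |a| := by
  rw [posPart_def]
  exact sup_le (le_abs_self a) (abs_nonneg a)

private lemma negPart_le_abs' (a : E) : a⁻ ≤ |a| := by
  rw [negPart_def, ← abs_neg a]
  exact sup_le (le_abs_self (-a)) (abs_nonneg (-a))

private lemma add_eq_sup_of_inf_zero {a b : E} (h : a ⊓ b = 0) : a + b = a ⊔ b := by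
  have := inf_add_sup a b
  rw [h, zero_add] at this
  exact this.symm

private lemma inf_zero_mono {a b a' b' : E} (h : a ⊓ b = 0) (ha' : 0 ≤ a') (hb' : 0 ≤ b')
    (haa : a' ≤ a) (hbb : b' ≤ b) : a' ⊓ b' = 0 :=
  le_antisymm (h ▸ inf_le_inf haa hbb) (le_inf ha' hb')

private lemma add_inf_of_disjoint {a b : E} (c : E) (ha : 0 ≤ a) (hb : 0 ≤ b) (hc : 0 ≤ c)
    (h : a ⊓ b = 0) : (a + b) ⊓ c = a ⊓ c + b ⊓ c := by
  have h1 : (a ⊓ c) ⊓ (b ⊓ c) = 0 :=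
    inf_zero_mono h (le_inf ha hc) (le_inf hb hc) inf_le_left inf_le_left
  rw [add_eq_sup_of_inf_zero h, inf_sup_right, ← add_eq_sup_of_inf_zero h1]

private lemma posPart_add_of_disjoint {a b : E} (h : |a| ⊓ |b| = 0) :
    (a + b)⁺ = a⁺ + b⁺ := by
  have key : ∀ a b : E, |a| ⊓ |b| = 0 → a⁺ ≤ (a + b)⁺ := by
    intro a b h
    set c := (a + b)⁺ with hc
    have h1 : a⁺ ≤ c + b⁻ := by
      rw [posPart_def]
      refine sup_le ?_ (add_nonneg (posPart_nonneg _) (negPart_nonneg _))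
      calc a = (a + b) - (b⁺ - b⁻) := by rw [posPart_sub_negPart]; abel
        _ = ((a + b) - b⁺) + b⁻ := by abel
        _ ≤ c + b⁻ := by
            refine add_le_add_left ?_ _
            calc (a + b) - b⁺ ≤ (a + b) - 0 := sub_le_sub_left (posPart_nonneg b) _
              _ = a + b := sub_zero _
              _ ≤ c := le_posPart _
    have h2 : a⁺ ⊓ (c + b⁻) = a⁺ := inf_eq_left.2 h1
    have h3 : a⁺ ⊓ (c + b⁻) = b⁻ + ((a⁺ - b⁻) ⊓ c) := by
      rw [add_inf (a⁺ - b⁻) c b⁻]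
      congr 1 <;> abel
    have h4 : (a⁺ - b⁻) ⊓ c ≤ a⁺ ⊓ c :=
      inf_le_inf (sub_le_self _ (negPart_nonneg b)) le_rfl
    have h5 : a⁺ - a⁺ ⊓ c ≤ b⁻ := by
      rw [sub_le_iff_le_add]
      calc a⁺ = b⁻ + ((a⁺ - b⁻) ⊓ c) := by rw [← h3, h2]
        _ ≤ b⁻ + a⁺ ⊓ c := add_le_add_right h4 _
    have h6 : (0:E) ≤ a⁺ - a⁺ ⊓ c := sub_nonneg.2 inf_le_left
    have h7 : a⁺ - a⁺ ⊓ c ≤ |a| :=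
      (sub_le_self _ (le_inf (posPart_nonneg a) (posPart_nonneg (a+b)))).trans
        (posPart_le_abs' a)
    have h8 : a⁺ - a⁺ ⊓ c = 0 :=
      le_antisymm (h ▸ le_inf h7 (h5.trans (negPart_le_abs' b))) h6
    exact (sub_eq_zero.1 h8).le.trans inf_le_right
  have hba : |b| ⊓ |a| = 0 := by rwa [inf_comm]
  have hab : a⁺ ⊓ b⁺ = 0 :=
    inf_zero_mono h (posPart_nonneg a) (posPart_nonneg b) (posPart_le_abs' a) (posPart_le_abs' b)
  refine le_antisymm ?_ ?_
  · rw [posPart_def]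
    refine sup_le (add_le_add (le_posPart a) (le_posPart b))
      (add_nonneg (posPart_nonneg a) (posPart_nonneg b))
  · rw [add_eq_sup_of_inf_zero hab]
    exact sup_le (key a b h) (by rw [add_comm]; exact key b a hba)

private lemma negPart_add_of_disjoint {a b : E} (h : |a| ⊓ |b| = 0) :
    (a + b)⁻ = a⁻ + b⁻ := by
  have h' : |(-a)| ⊓ |(-b)| = 0 := by rwa [abs_neg, abs_neg]
  rw [← posPart_neg, neg_add, posPart_add_of_disjoint h', posPart_neg, posPart_neg]

private lemma abs_add_of_disjoint {a b : E} (h : |a| ⊓ |b| = 0) :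
    |a + b| = |a| + |b| := by
  rw [← posPart_add_negPart (a + b), posPart_add_of_disjoint h, negPart_add_of_disjoint h,
    ← posPart_add_negPart a, ← posPart_add_negPart b]
  abel

private lemma inf_add_add {a1 a2 b1 b2 : E} (ha1 : 0 ≤ a1) (ha2 : 0 ≤ a2) (hb1 : 0 ≤ b1)
    (hb2 : 0 ≤ b2) (ha : a1 ⊓ a2 = 0) (hb : b1 ⊓ b2 = 0) (hc1 : a1 ⊓ b2 = 0)
    (hc2 : a2 ⊓ b1 = 0) : (a1 + a2) ⊓ (b1 + b2) = a1 ⊓ b1 + a2 ⊓ b2 := by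
  rw [add_inf_of_disjoint _ ha1 ha2 (add_nonneg hb1 hb2) ha,
    inf_comm a1, inf_comm a2,
    add_inf_of_disjoint _ hb1 hb2 ha1 hb, add_inf_of_disjoint _ hb1 hb2 ha2 hb,
    inf_comm b2 a1, hc1, inf_comm b1 a2, hc2, add_zero, zero_add,
    inf_comm b1 a1, inf_comm b2 a2]

end auxLacey

/-- If `P` is a band projection on a Riesz space and `U = 2P − I` the associated
sign change, then `b(Ux, Uy) = U(b(x,y))` for Lacey's function `b`. -/
theorem stmt15 {E : Type*} [Lattice E] [AddCommGroup E] [Module ℝ E]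
    [CovariantClass E E (· + ·) (· ≤ ·)]
    (P : E →ₗ[ℝ] E)
    (hpos : ∀ x : E, 0 ≤ x → 0 ≤ P x)
    (hpos' : ∀ x : E, 0 ≤ x → 0 ≤ x - P x)
    (hidem : ∀ x : E, P (P x) = P x)
    (hdisj : ∀ x y : E, |P x| ⊓ |y - P y| = 0) :
    ∀ x y : E,
      bLacey (2 • P x - x) (2 • P y - y) = 2 • P (bLacey x y) - bLacey x y := by
  -- range/kernel absorption lemmas
  have F1 : ∀ a t : E, 0 ≤ t → t ≤ |P a| → P t = t := by
    intro a t ht hle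
    have h1 : 0 ≤ t - P t := hpos' t ht
    have h2 : t - P t ≤ t := sub_le_self _ (hpos t ht)
    have h3 : t - P t ≤ |P a| ⊓ |t - P t| := le_inf (h2.trans hle) (le_abs_self _)
    rw [hdisj a t] at h3
    exact (sub_eq_zero.1 (le_antisymm h3 h1)).symm
  have F2 : ∀ a t : E, 0 ≤ t → t ≤ |a - P a| → P t = 0 := by
    intro a t ht hle
    have h1 : 0 ≤ P t := hpos t ht
    have h2 : P t ≤ t := sub_nonneg.1 (hpos' t ht)
    have h3 : P t ≤ |P (P t)| ⊓ |a - P a| := by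
      refine le_inf ?_ (h2.trans hle)
      rw [hidem t, abs_of_nonneg h1]
    rw [hdisj (P t) a] at h3
    exact le_antisymm h3 h1
  intro x y
  set p := P x with hp
  set q := x - P x with hq
  set u := P y with hu
  set v := y - P y with hv
  have hx : x = p + q := by rw [hq]; abel
  have hy : y = u + v := by rw [hv]; abel
  have dpq : |p| ⊓ |q| = 0 := hdisj x x
  have duv : |u| ⊓ |v| = 0 := hdisj y y
  have dpv : |p| ⊓ |v| = 0 := hdisj x y
  have dqu : |q| ⊓ |u| = 0 := by rw [inf_comm]; exact hdisj y x
  -- cross-term vanishing helper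
  have cross : ∀ a b a' b' : E, |a| ⊓ |b| = 0 → 0 ≤ a' → 0 ≤ b' → a' ≤ |a| → b' ≤ |b| →
      a' ⊓ b' = 0 := fun a b a' b' h ha hb haa hbb => inf_zero_mono h ha hb haa hbb
  -- decompositions
  have habs : |x| = |p| + |q| := by rw [hx]; exact abs_add_of_disjoint dpq
  have hyp : y⁺ = u⁺ + v⁺ := by rw [hy]; exact posPart_add_of_disjoint duv
  have hyn : y⁻ = u⁻ + v⁻ := by rw [hy]; exact negPart_add_of_disjoint duv
  have hux : 2 • p - x = p + -q := by rw [hx]; abel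
  have huy : 2 • u - y = u + -v := by rw [hy]; abel
  have dpq' : |p| ⊓ |(-q)| = 0 := by rwa [abs_neg]
  have duv' : |u| ⊓ |(-v)| = 0 := by rwa [abs_neg]
  have habs' : |2 • p - x| = |p| + |q| := by
    rw [hux, abs_add_of_disjoint dpq', abs_neg]
  have hup : (2 • u - y)⁺ = u⁺ + v⁻ := by
    rw [huy, posPart_add_of_disjoint duv', posPart_neg]
  have hun : (2 • u - y)⁻ = u⁻ + v⁺ := by
    rw [huy, negPart_add_of_disjoint duv', negPart_neg]
  -- the four components
  set A := |p| ⊓ u⁺ with hA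
  set B := |q| ⊓ v⁺ with hB
  set C := |p| ⊓ u⁻ with hC
  set D := |q| ⊓ v⁻ with hD
  have split : ∀ w z : E, 0 ≤ w → 0 ≤ z → w ≤ |u| → z ≤ |v| →
      (|p| + |q|) ⊓ (w + z) = |p| ⊓ w + |q| ⊓ z := by
    intro w z hw hz hwu hzv
    exact inf_add_add (abs_nonneg p) (abs_nonneg q) hw hz dpq
      (cross u v w z duv hw hz hwu hzv)
      (cross p v |p| z dpv (abs_nonneg p) hz le_rfl hzv)
      (cross q u |q| w dqu (abs_nonneg q) hw le_rfl hwu)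
  have e1 : |x| ⊓ y⁺ = A + B := by
    rw [habs, hyp]
    exact split _ _ (posPart_nonneg u) (posPart_nonneg v) (posPart_le_abs' u) (posPart_le_abs' v)
  have e2 : |x| ⊓ y⁻ = C + D := by
    rw [habs, hyn]
    exact split _ _ (negPart_nonneg u) (negPart_nonneg v) (negPart_le_abs' u) (negPart_le_abs' v)
  have e3 : |2 • p - x| ⊓ (2 • u - y)⁺ = A + D := by
    rw [habs', hup]
    exact split _ _ (posPart_nonneg u) (negPart_nonneg v) (posPart_le_abs' u) (negPart_le_abs' v)
  have e4 : |2 • p - x| ⊓ (2 • u - y)⁻ = C + B := by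
    rw [habs', hun]
    exact split _ _ (negPart_nonneg u) (posPart_nonneg v) (negPart_le_abs' u) (posPart_le_abs' v)
  -- P acts on the components
  have infge : ∀ w z : E, 0 ≤ w → 0 ≤ z → (0:E) ≤ w ⊓ z := fun w z hw hz => le_inf hw hz
  have hPA : P A = A := F1 x A (infge _ _ (abs_nonneg p) (posPart_nonneg u)) (hp ▸ inf_le_left)
  have hPC : P C = C := F1 x C (infge _ _ (abs_nonneg p) (negPart_nonneg u)) (hp ▸ inf_le_left)
  have hPB : P B = 0 := F2 x B (infge _ _ (abs_nonneg q) (posPart_nonneg v)) (hq ▸ inf_le_left)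
  have hPD : P D = 0 := F2 x D (infge _ _ (abs_nonneg q) (negPart_nonneg v)) (hq ▸ inf_le_left)
  have hb : bLacey x y = A + B - (C + D) := by
    rw [bLacey, ← posPart_def, ← negPart_def, e1, e2]
  have hPb : P (bLacey x y) = A - C := by
    rw [hb, map_sub, map_add, map_add, hPA, hPB, hPC, hPD, add_zero, add_zero]
  -- assemble
  rw [hPb, hb]
  show |2 • p - x| ⊓ ((2 • u - y) ⊔ 0) - |2 • p - x| ⊓ ((-(2 • u - y)) ⊔ 0) = _
  rw [← posPart_def, ← negPart_def, e3, e4]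
  abel
end
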